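/- Let Γ be a commutative thick weakly distance-regular digraph in which the configuration C(q) exists, i.e. p^{(1,q-2)}_{(1,q-1),(1,q-1)} ≠ 0 and (1,q-2) is pure. Then any shortest directed path between distinct vertices of Γ contains at most two arcs of type (1,q-1). -/
import Mathlib


/-!
Common framework: commutative thick weakly distance-regular digraphs.
-/

variable {V : Type*}

/-- There is a directed walk of length `n` from `x` to `y`. -/
def HasWalk (adj : V → V → Prop) (x y : V) (n : ℕ) : Prop :=
  ∃ f : ℕ → V, f 0 = x ∧ f n = y ∧ ∀ i < n, adj (f i) (f (i + 1))

/-- Directed distance `∂(x,y)`. -/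
noncomputable def ddist (adj : V → V → Prop) (x y : V) : ℕ :=
  sInf {n | HasWalk adj x y n}

/-- Two-way distance `∂̃(x,y) = (∂(x,y), ∂(y,x))`. -/
noncomputable def tdist (adj : V → V → Prop) (x y : V) : ℕ × ℕ :=
  (ddist adj x y, ddist adj y x)

/-- The pair `i` is an attained two-way distance, i.e. `i ∈ ∂̃(Γ)`. -/
def Attained (adj : V → V → Prop) (i : ℕ × ℕ) : Prop :=
  ∃ x y : V, tdist adj x y = i

/-- Intersection number `p^h_{i,j}`: for attained `h` it is the common cardinality of
`{z | ∂̃(x,z) = i, ∂̃(z,y) = j}` over pairs with `∂̃(x,y) = h` (and `0` otherwise). -/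
noncomputable def pnum (adj : V → V → Prop) (h i j : ℕ × ℕ) : ℕ :=
  sSup {n | ∃ x y : V, tdist adj x y = h ∧
    n = Set.ncard {z : V | tdist adj x z = i ∧ tdist adj z y = j}}

/-- Valency `k_i = |Γ_i(x)|`. -/
noncomputable def kval (adj : V → V → Prop) (i : ℕ × ℕ) : ℕ :=
  pnum adj (0, 0) i i.swap

/-- Adjacency of the subdigraph `Δ_J`: arcs of type `(1, t-1)` for `t ∈ J`. -/
def deltaAdj (adj : V → V → Prop) (J : Set ℕ) (u v : V) : Prop :=
  ∃ t ∈ J, tdist adj u v = (1, t - 1)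

/-- A circuit of length `s`. -/
def IsCircuit (adj : V → V → Prop) (s : ℕ) (f : ℕ → V) : Prop :=
  0 < s ∧ f s = f 0 ∧ ∀ i < s, adj (f i) (f (i + 1))

/-- Strongly connected. -/
def IsStrong (adj : V → V → Prop) : Prop :=
  ∀ x y : V, ∃ n, HasWalk adj x y n

/-- Weakly distance-regular: the intersection numbers are well defined. -/
def IsWDR (adj : V → V → Prop) : Prop :=
  ∀ (i j : ℕ × ℕ) (x y x' y' : V), tdist adj x y = tdist adj x' y' →
    Set.ncard {z : V | tdist adj x z = i ∧ tdist adj z y = j}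
      = Set.ncard {z : V | tdist adj x' z = i ∧ tdist adj z y' = j}

/-- Thick: `p^h_{i,i}, p^h_{i,i*} ∈ {0, k_i}`. -/
def IsThick (adj : V → V → Prop) : Prop :=
  ∀ h i : ℕ × ℕ,
    (pnum adj h i i = 0 ∨ pnum adj h i i = kval adj i) ∧
    (pnum adj h i i.swap = 0 ∨ pnum adj h i i.swap = kval adj i)

/-- A thick weakly distance-regular digraph (as a property of an adjacency relation). -/
def IsWDRThick (adj : V → V → Prop) : Prop :=
  IsStrong adj ∧ IsWDR adj ∧ IsThick adj

/-- A commutative thick weakly distance-regular digraph. -/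
structure CTWDR (V : Type*) [Fintype V] where
  adj : V → V → Prop
  loopless : ∀ v, ¬ adj v v
  strong : IsStrong adj
  wdr : IsWDR adj
  comm : ∀ (i j : ℕ × ℕ) (x y : V),
    Set.ncard {z : V | tdist adj x z = i ∧ tdist adj z y = j}
      = Set.ncard {z : V | tdist adj x z = j ∧ tdist adj z y = i}
  thick : IsThick adj

namespace CTWDR

variable {V : Type*} [Fintype V] (G : CTWDR V)

/-- Product `EF` of two sets of relations (relations identified with two-way distances). -/
def prodS (E F : Set (ℕ × ℕ)) : Set (ℕ × ℕ) :=
  {h | ∃ i ∈ E, ∃ j ∈ F, pnum G.adj h i j ≠ 0}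

/-- Powers `Γ_i^l` (with `Γ_i^0 = {Γ_{(0,0)}}` and `Γ_i^1 = {Γ_i}`). -/
def pow (i : ℕ × ℕ) : ℕ → Set (ℕ × ℕ)
  | 0 => {(0, 0)}
  | 1 => {i}
  | n + 2 => G.prodS (pow i (n + 1)) {i}

/-- The pair `(1, s-1)` is pure: every circuit of length `s` containing an arc of type
`(1, s-1)` consists of arcs of type `(1, s-1)`. -/
def Pure (s : ℕ) : Prop :=
  ∀ f : ℕ → V, IsCircuit G.adj s f →
    (∃ i < s, tdist G.adj (f i) (f (i + 1)) = (1, s - 1)) →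
    ∀ i < s, tdist G.adj (f i) (f (i + 1)) = (1, s - 1)

/-- `(1, s-1)` is mixed. -/
def Mixed (s : ℕ) : Prop := ¬ G.Pure s

/-- Configuration `C(q)` exists. -/
def Cexists (q : ℕ) : Prop :=
  pnum G.adj (1, q - 2) (1, q - 1) (1, q - 1) ≠ 0 ∧ G.Pure (q - 1)

/-- Configuration `D(q)` exists. -/
def Dexists (q : ℕ) : Prop :=
  pnum G.adj (1, q - 1) (1, q - 2) (q - 2, 1) ≠ 0 ∧ G.Pure (q - 1)

/-- A closed set of relations: `Γ_{i*}Γ_j ⊆ F` for all `i, j ∈ F`. -/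
def Closed (F : Set (ℕ × ℕ)) : Prop :=
  ∀ i ∈ F, ∀ j ∈ F, G.prodS {i.swap} {j} ⊆ F

/-- The minimal closed set `⟨F⟩` containing `F`. -/
def genClosed (F : Set (ℕ × ℕ)) : Set (ℕ × ℕ) :=
  ⋂₀ {C | F ⊆ C ∧ G.Closed C}

/-- The block `F_J(x)` of the closed set generated by `{Γ_{1,t-1}}_{t ∈ J}`. -/
def block (J : Set ℕ) (x : V) : Set V :=
  {y | tdist G.adj x y ∈ G.genClosed {i | ∃ t ∈ J, i = (1, t - 1)}}

end CTWDR
section WalkLemmas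

variable {V : Type*}

lemma hasWalk_refl (adj : V → V → Prop) (x : V) : HasWalk adj x x 0 :=
  ⟨fun _ => x, rfl, rfl, fun i hi => absurd hi (Nat.not_lt_zero i)⟩

lemma hasWalk_concat {adj : V → V → Prop} {x y z : V} {m k : ℕ}
    (h1 : HasWalk adj x y m) (h2 : HasWalk adj y z k) : HasWalk adj x z (m + k) := by
  obtain ⟨f, hf0, hfm, hf⟩ := h1
  obtain ⟨g, hg0, hgk, hg⟩ := h2
  refine ⟨fun i => if i < m then f i else g (i - m), ?_, ?_, ?_⟩
  · by_cases h : 0 < m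
    · simp [h, hf0]
    · have hm : m = 0 := by omega
      subst hm
      simp only [if_neg (lt_irrefl 0), Nat.sub_zero, hg0]
      rw [← hfm, hf0]
  · have h : ¬ m + k < m := by omega
    simp only [if_neg h, Nat.add_sub_cancel_left, hgk]
  · intro i hi
    by_cases h1 : i + 1 < m
    · have h2 : i < m := by omega
      simp only [if_pos h1, if_pos h2]
      exact hf i h2
    · by_cases h2 : i < m
      · -- i + 1 = m
        have he : i + 1 = m := by omega
        simp only [if_pos h2, if_neg h1]
        have : g (i + 1 - m) = f m := by rw [he]; simp [hg0, hfm]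
      -- f i → f (i+1) = f m = y = g 0
        rw [this, ← he]
        exact hf i (by omega)
      · simp only [if_neg h1, if_neg h2]
        have h3 : i - m < k := by omega
        have h4 : i + 1 - m = (i - m) + 1 := by omega
        rw [h4]
        exact hg (i - m) h3

lemma ddist_le_of_walk {adj : V → V → Prop} {x y : V} {n : ℕ}
    (h : HasWalk adj x y n) : ddist adj x y ≤ n :=
  Nat.sInf_le h

lemma hasWalk_ddist {adj : V → V → Prop} (hs : IsStrong adj) (x y : V) :
    HasWalk adj x y (ddist adj x y) := by
  have : {n | HasWalk adj x y n}.Nonempty := hs x y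
  exact Nat.sInf_mem this

lemma ddist_triangle {adj : V → V → Prop} (hs : IsStrong adj) (x y z : V) :
    ddist adj x z ≤ ddist adj x y + ddist adj y z :=
  ddist_le_of_walk (hasWalk_concat (hasWalk_ddist hs x y) (hasWalk_ddist hs y z))

lemma ddist_self (adj : V → V → Prop) (x : V) : ddist adj x x = 0 :=
  Nat.le_zero.mp (ddist_le_of_walk (hasWalk_refl adj x))

lemma eq_of_ddist_eq_zero {adj : V → V → Prop} (hs : IsStrong adj) {x y : V}
    (h : ddist adj x y = 0) : x = y := by
  have hw : HasWalk adj x y 0 := h ▸ hasWalk_ddist hs x y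
  obtain ⟨f, hf0, hfn, -⟩ := hw
  rw [← hf0, hfn]

lemma adj_of_ddist_eq_one {adj : V → V → Prop} (hs : IsStrong adj) {x y : V}
    (h : ddist adj x y = 1) : adj x y := by
  have hw : HasWalk adj x y 1 := h ▸ hasWalk_ddist hs x y
  obtain ⟨f, hf0, hfn, hf⟩ := hw
  have := hf 0 (by omega)
  rwa [hf0, hfn] at this

lemma tdist_self (adj : V → V → Prop) (x : V) : tdist adj x x = (0, 0) := by
  simp [tdist, ddist_self]

lemma tdist_symm (adj : V → V → Prop) (x y : V) :
    tdist adj y x = (tdist adj x y).swap := rfl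

lemma adj_of_tdist_fst {adj : V → V → Prop} (hs : IsStrong adj) {x y : V} {i : ℕ × ℕ}
    (h : tdist adj x y = i) (hi : i.1 = 1) : adj x y := by
  apply adj_of_ddist_eq_one hs
  have : (tdist adj x y).1 = 1 := by rw [h, hi]
  exact this

end WalkLemmas
section SegmentLemmas

variable {V : Type*}

lemma hasWalk_segment {adj : V → V → Prop} {f : ℕ → V} {n : ℕ}
    (hf : ∀ i < n, adj (f i) (f (i + 1))) {i j : ℕ} (hij : i ≤ j) (hjn : j ≤ n) :
    HasWalk adj (f i) (f j) (j - i) := by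
  refine ⟨fun t => f (i + t), by simp, ?_, ?_⟩
  · show f (i + (j - i)) = f j
    congr 1
    omega
  · intro t ht
    show adj (f (i + t)) (f (i + (t + 1)))
    have h1 : i + t < n := by omega
    have h2 : i + (t + 1) = (i + t) + 1 := by omega
    rw [h2]
    exact hf (i + t) h1

/-- On a shortest path each sub-distance is exact. -/
lemma ddist_segment {adj : V → V → Prop} (hs : IsStrong adj) {f : ℕ → V} {n : ℕ}
    (hf : ∀ i < n, adj (f i) (f (i + 1))) (hsh : ddist adj (f 0) (f n) = n)
    {i j : ℕ} (hij : i ≤ j) (hjn : j ≤ n) : ddist adj (f i) (f j) = j - i := by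
  have h1 : ddist adj (f i) (f j) ≤ j - i :=
    ddist_le_of_walk (hasWalk_segment hf hij hjn)
  have h2 : ddist adj (f 0) (f i) ≤ i := by
    simpa using ddist_le_of_walk (hasWalk_segment hf (Nat.zero_le i) (le_trans hij hjn))
  have h3 : ddist adj (f j) (f n) ≤ n - j :=
    ddist_le_of_walk (hasWalk_segment hf hjn (le_refl n))
  have h4 : ddist adj (f 0) (f n) ≤ ddist adj (f 0) (f i) + ddist adj (f i) (f j)
      + ddist adj (f j) (f n) := by
    calc ddist adj (f 0) (f n) ≤ ddist adj (f 0) (f j) + ddist adj (f j) (f n) :=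
          ddist_triangle hs _ _ _
      _ ≤ (ddist adj (f 0) (f i) + ddist adj (f i) (f j)) + ddist adj (f j) (f n) := by
          exact Nat.add_le_add_right (ddist_triangle hs _ _ _) _
  rw [hsh] at h4
  omega

end SegmentLemmas

section PnumLemmas

variable {V : Type*} [Fintype V]

omit [Fintype V] in
lemma pnum_eq {adj : V → V → Prop} (hwdr : IsWDR adj) (x y : V) (i j : ℕ × ℕ) :
    pnum adj (tdist adj x y) i j
      = Set.ncard {z : V | tdist adj x z = i ∧ tdist adj z y = j} := by
  apply IsGreatest.csSup_eq
  constructor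
  · exact ⟨x, y, rfl, rfl⟩
  · rintro m ⟨x', y', he, rfl⟩
    rw [hwdr i j x' y' x y he]

omit [Fintype V] in
lemma kval_eq {adj : V → V → Prop} (_hs : IsStrong adj) (hwdr : IsWDR adj) (u : V)
    (i : ℕ × ℕ) : kval adj i = Set.ncard {z : V | tdist adj u z = i} := by
  have h0 : tdist adj u u = (0, 0) := tdist_self adj u
  have := pnum_eq hwdr u u i i.swap
  rw [h0] at this
  rw [kval, this]
  congr 1
  ext z
  simp only [Set.mem_setOf_eq, and_iff_left_iff_imp]
  intro hz
  rw [tdist_symm, hz]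

/-- transfer an existence statement along pairs with equal two-way distance. -/
lemma exists_transfer {adj : V → V → Prop} (hwdr : IsWDR adj) {x y x' y' : V}
    (he : tdist adj x y = tdist adj x' y') {i j : ℕ × ℕ}
    (h : ∃ z, tdist adj x' z = i ∧ tdist adj z y' = j) :
    ∃ z, tdist adj x z = i ∧ tdist adj z y = j := by
  obtain ⟨z, hz⟩ := h
  have hcard := hwdr i j x y x' y' he
  have hne : {z : V | tdist adj x' z = i ∧ tdist adj z y' = j}.Nonempty := ⟨z, hz⟩
  have hpos : 0 < Set.ncard {z : V | tdist adj x' z = i ∧ tdist adj z y' = j} :=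
    (Set.ncard_pos (Set.toFinite _)).mpr hne
  rw [← hcard] at hpos
  have := (Set.ncard_pos (Set.toFinite _)).mp hpos
  exact this

end PnumLemmas
namespace CTWDRAux

variable {V : Type*} [Fintype V] (G : CTWDR V)

/-- Key membership lemma: if there is a 2-path of type (i,i) from x to y, then every
    i-out-neighbor of x is an i-in-neighbor of y. -/
lemma step {i : ℕ × ℕ} {x y v w : V} (hw1 : tdist G.adj x w = i)
    (hw2 : tdist G.adj w y = i) (hv : tdist G.adj x v = i) : tdist G.adj v y = i := by
  have hp : pnum G.adj (tdist G.adj x y) i i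
      = Set.ncard {z : V | tdist G.adj x z = i ∧ tdist G.adj z y = i} :=
    pnum_eq G.wdr x y i i
  have hne : {z : V | tdist G.adj x z = i ∧ tdist G.adj z y = i}.Nonempty := ⟨w, hw1, hw2⟩
  have hpos : 0 < Set.ncard {z : V | tdist G.adj x z = i ∧ tdist G.adj z y = i} :=
    (Set.ncard_pos (Set.toFinite _)).mpr hne
  have hthick := (G.thick (tdist G.adj x y) i).1
  have hk : pnum G.adj (tdist G.adj x y) i i = kval G.adj i := by
    rcases hthick with h | h
    · omega
    · exact h
  have hkx : kval G.adj i = Set.ncard {z : V | tdist G.adj x z = i} :=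
    kval_eq G.strong G.wdr x i
  have hsub : {z : V | tdist G.adj x z = i ∧ tdist G.adj z y = i}
      ⊆ {z : V | tdist G.adj x z = i} := fun z hz => hz.1
  have hle : Set.ncard {z : V | tdist G.adj x z = i}
      ≤ Set.ncard {z : V | tdist G.adj x z = i ∧ tdist G.adj z y = i} := by
    rw [← hp, hk, hkx]
  have heq := Set.eq_of_subset_of_ncard_le hsub hle (Set.toFinite _)
  have : v ∈ {z : V | tdist G.adj x z = i ∧ tdist G.adj z y = i} := by
    rw [heq]; exact hv
  exact this.2

variable {q : ℕ}

/-- Extract witnesses from `C(q)`. -/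
lemma witness (hC : G.Cexists q) :
    ∃ x y w : V, tdist G.adj x y = (1, q - 2) ∧ tdist G.adj x w = (1, q - 1) ∧
      tdist G.adj w y = (1, q - 1) := by
  have h1 := hC.1
  set S := {n | ∃ x y : V, tdist G.adj x y = (1, q - 2) ∧
    n = Set.ncard {z : V | tdist G.adj x z = (1, q - 1) ∧ tdist G.adj z y = (1, q - 1)}}
    with hS
  have hSne : S.Nonempty := by
    by_contra h
    rw [Set.not_nonempty_iff_eq_empty] at h
    rw [pnum] at h1
    rw [← hS, h] at h1
    simp at h1
  have hbdd : BddAbove S := by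
    refine ⟨Fintype.card V, ?_⟩
    rintro m ⟨x, y, -, rfl⟩
    calc Set.ncard _ ≤ Set.ncard (Set.univ : Set V) :=
          Set.ncard_le_ncard (Set.subset_univ _) (Set.toFinite _)
      _ = Fintype.card V := by rw [Set.ncard_univ, Nat.card_eq_fintype_card]
  have hmem : sSup S ∈ S := Nat.sSup_mem hSne hbdd
  obtain ⟨x, y, hxy, hcard⟩ := hmem
  have hpos : 0 < Set.ncard {z : V | tdist G.adj x z = (1, q - 1) ∧
      tdist G.adj z y = (1, q - 1)} := by
    rw [← hcard]
    exact Nat.pos_of_ne_zero h1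
  obtain ⟨w, hw⟩ := (Set.ncard_pos (Set.toFinite _)).mp hpos
  exact ⟨x, y, w, hxy, hw.1, hw.2⟩

/-- Every vertex has a `(1,q-2)`-out-neighbor, together with an intermediate
    `(1,q-1)`-`(1,q-1)` configuration. -/
lemma bout (hC : G.Cexists q) (u : V) :
    ∃ t w : V, tdist G.adj u t = (1, q - 2) ∧ tdist G.adj u w = (1, q - 1) ∧
      tdist G.adj w t = (1, q - 1) := by
  obtain ⟨x, y, w0, hxy, hxw, hwy⟩ := witness G hC
  -- first: some t with tdist u t = (1,q-2), via pair (u,u) vs (x,x)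
  have he : tdist G.adj u u = tdist G.adj x x := by
    rw [tdist_self, tdist_self]
  have h1 : ∃ z, tdist G.adj x z = (1, q - 2) ∧ tdist G.adj z x = (q - 2, 1) := by
    refine ⟨y, hxy, ?_⟩
    rw [tdist_symm, hxy]
    rfl
  obtain ⟨t, ht, -⟩ := exists_transfer G.wdr he h1
  -- now transfer the witness configuration to the pair (u, t)
  have he2 : tdist G.adj u t = tdist G.adj x y := by rw [ht, hxy]
  obtain ⟨w, hw1, hw2⟩ := exists_transfer G.wdr he2 ⟨w0, hxw, hwy⟩
  exact ⟨t, w, ht, hw1, hw2⟩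

/-- Three consecutive arcs of type `(1,q-1)` with end-to-end distance 3: impossible. -/
lemma consec (hC : G.Cexists q) {u v w z : V}
    (huv : tdist G.adj u v = (1, q - 1)) (hvw : tdist G.adj v w = (1, q - 1))
    (hwz : tdist G.adj w z = (1, q - 1)) (hd : ddist G.adj u z = 3) : False := by
  obtain ⟨t, w', ht, hw1, hw2⟩ := bout G hC u
  -- v is a (1,q-1)-out-neighbor of u, hence (1,q-1)-in-neighbor of t
  have hvt : tdist G.adj v t = (1, q - 1) := step G hw1 hw2 huv
  -- t is a (1,q-1)-out-neighbor of v; w witnesses a 2-path v→w→z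
  have htz : tdist G.adj t z = (1, q - 1) := step G hvw hwz hvt
  have h1 : ddist G.adj u t = 1 := by
    have : (tdist G.adj u t).1 = 1 := by rw [ht]
    exact this
  have h2 : ddist G.adj t z = 1 := by
    have : (tdist G.adj t z).1 = 1 := by rw [htz]
    exact this
  have := ddist_triangle G.strong u t z
  omega

end CTWDRAux
namespace CTWDRAux

variable {V : Type*} [Fintype V] (G : CTWDR V) {q : ℕ}

/-- Swap a `(1,q-1)`-arc at position `j` on a shortest path with the previous arc. -/
lemma swap_step {f : ℕ → V} {n j : ℕ}
    (hf : ∀ i < n, G.adj (f i) (f (i + 1))) (hsh : ddist G.adj (f 0) (f n) = n)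
    (hj1 : 1 ≤ j) (hjn : j < n) (hA : tdist G.adj (f j) (f (j + 1)) = (1, q - 1)) :
    ∃ f' : ℕ → V, (∀ i < n, G.adj (f' i) (f' (i + 1))) ∧ ddist G.adj (f' 0) (f' n) = n ∧
      tdist G.adj (f' (j - 1)) (f' j) = (1, q - 1) ∧ ∀ i, i ≠ j → f' i = f i := by
  set σ := tdist G.adj (f (j - 1)) (f j) with hσ
  have hσ1 : σ.1 = 1 := by
    have := ddist_segment G.strong hf hsh (show j - 1 ≤ j by omega) (le_of_lt hjn)
    have hj : j - (j - 1) = 1 := by omega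
    rw [hj] at this
    exact this
  have hcomm := G.comm σ (1, q - 1) (f (j - 1)) (f (j + 1))
  have hmem : f j ∈ {z : V | tdist G.adj (f (j - 1)) z = σ ∧
      tdist G.adj z (f (j + 1)) = (1, q - 1)} := ⟨rfl, hA⟩
  have hpos : 0 < Set.ncard {z : V | tdist G.adj (f (j - 1)) z = σ ∧
      tdist G.adj z (f (j + 1)) = (1, q - 1)} :=
    (Set.ncard_pos (Set.toFinite _)).mpr ⟨f j, hmem⟩
  rw [hcomm] at hpos
  obtain ⟨z, hz1, hz2⟩ := (Set.ncard_pos (Set.toFinite _)).mp hpos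
  refine ⟨Function.update f j z, ?_, ?_, ?_, ?_⟩
  · intro i hi
    rcases eq_or_ne i (j - 1) with h1 | h1
    · subst h1
      have e1 : Function.update f j z (j - 1) = f (j - 1) :=
        Function.update_of_ne (by omega) _ _
      have e2 : j - 1 + 1 = j := by omega
      have e3 : Function.update f j z (j - 1 + 1) = z := by
        rw [e2]; exact Function.update_self _ _ _
      rw [e1, e3]
      exact adj_of_tdist_fst G.strong hz1 rfl
    · rcases eq_or_ne i j with h2 | h2
      · rw [h2]
        have e1 : Function.update f j z j = z := Function.update_self _ _ _
        have e2 : Function.update f j z (j + 1) = f (j + 1) :=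
          Function.update_of_ne (by omega) _ _
        rw [e1, e2]
        exact adj_of_tdist_fst G.strong hz2 hσ1
      · have e1 : Function.update f j z i = f i := Function.update_of_ne h2 _ _
        have e2 : Function.update f j z (i + 1) = f (i + 1) :=
          Function.update_of_ne (by omega) _ _
        rw [e1, e2]
        exact hf i hi
  · have e1 : Function.update f j z 0 = f 0 := Function.update_of_ne (by omega) _ _
    have e2 : Function.update f j z n = f n := Function.update_of_ne (by omega) _ _
    rw [e1, e2]
    exact hsh
  · have e1 : Function.update f j z (j - 1) = f (j - 1) :=
      Function.update_of_ne (by omega) _ _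
    have e2 : Function.update f j z j = z := Function.update_self _ _ _
    rw [e1, e2]
    exact hz1
  · intro i hi
    exact Function.update_of_ne hi _ _

/-- Main inductive lemma: no shortest path contains three arcs of type `(1,q-1)`. -/
lemma main (hC : G.Cexists q) :
    ∀ m : ℕ, ∀ (f : ℕ → V) (n a b c : ℕ),
      (∀ i < n, G.adj (f i) (f (i + 1))) → ddist G.adj (f 0) (f n) = n →
      a < b → b < c → c < n →
      tdist G.adj (f a) (f (a + 1)) = (1, q - 1) →
      tdist G.adj (f b) (f (b + 1)) = (1, q - 1) →
      tdist G.adj (f c) (f (c + 1)) = (1, q - 1) →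
      (b - a) + (c - a) ≤ m → False := by
  intro m
  induction m with
  | zero =>
    intro f n a b c _ _ hab hbc _ _ _ _ hm
    omega
  | succ m ih =>
    intro f n a b c hf hsh hab hbc hcn hA hB hCc hm
    by_cases hcase : c = a + 2
    · -- consecutive triple
      have hb : b = a + 1 := by omega
      have hd : ddist G.adj (f a) (f (a + 3)) = 3 := by
        have := ddist_segment G.strong hf hsh (show a ≤ a + 3 by omega)
          (show a + 3 ≤ n by omega)
        simpa using this
      apply consec G hC hA (show tdist G.adj (f (a + 1)) (f (a + 1 + 1)) = (1, q - 1) from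
        hb ▸ hB) _ hd
      have : a + 1 + 1 = c := by omega
      rw [this]
      have : a + 1 + 1 + 1 = c + 1 := by omega
      rw [this]
      exact hCc
    · by_cases hb2 : a + 1 < b
      · -- move the arc at b leftwards
        by_cases hAprev : tdist G.adj (f (b - 1)) (f (b - 1 + 1)) = (1, q - 1)
        · -- the arc at b-1 is already of type (1,q-1): use triple (a, b-1, b)
          exact ih f n a (b - 1) b hf hsh (by omega) (by omega) (by omega)
            hA hAprev hB (by omega)
        · obtain ⟨f', hf', hsh', hAnew, hsame⟩ := swap_step G hf hsh
            (show 1 ≤ b by omega) (show b < n by omega) hB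
          have ht : ∀ i, i ≠ b - 1 → i ≠ b → i + 1 ≠ b →
              tdist G.adj (f' i) (f' (i + 1)) = tdist G.adj (f i) (f (i + 1)) := by
            intro i h1 h2 h3
            rw [hsame i h2, hsame (i + 1) h3]
          refine ih f' n a (b - 1) c hf' hsh' (by omega) (by omega) (by omega) ?_ ?_ ?_
            (by omega)
          · rw [ht a (by omega) (by omega) (by omega)]
            exact hA
          · have e : b - 1 + 1 = b := by omega
            rw [e]
            exact hAnew
          · rw [ht c (by omega) (by omega) (by omega)]
            exact hCc
      · -- b = a + 1, hence c > b + 1: move the arc at c leftwards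
        have hb : b = a + 1 := by omega
        have hc2 : b + 1 < c := by omega
        by_cases hAprev : tdist G.adj (f (c - 1)) (f (c - 1 + 1)) = (1, q - 1)
        · exact ih f n a b (c - 1) hf hsh hab (by omega) (by omega)
            hA hB hAprev (by omega)
        · obtain ⟨f', hf', hsh', hAnew, hsame⟩ := swap_step G hf hsh
            (show 1 ≤ c by omega) hcn hCc
          have ht : ∀ i, i ≠ c - 1 → i ≠ c → i + 1 ≠ c →
              tdist G.adj (f' i) (f' (i + 1)) = tdist G.adj (f i) (f (i + 1)) := by
            intro i h1 h2 h3
            rw [hsame i h2, hsame (i + 1) h3]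
          refine ih f' n a b (c - 1) hf' hsh' hab (by omega) (by omega) ?_ ?_ ?_
            (by omega)
          · rw [ht a (by omega) (by omega) (by omega)]
            exact hA
          · rw [ht b (by omega) (by omega) (by omega)]
            exact hB
          · have e : c - 1 + 1 = c := by omega
            rw [e]
            exact hAnew

end CTWDRAux
/-- Lemma 2.3: if `C(q)` exists, any shortest path between distinct
vertices contains at most two arcs of type `(1, q-1)`. -/
theorem stmt2 {V : Type*} [Fintype V] (G : CTWDR V) (q : ℕ) (hC : G.Cexists q)
    (x y : V) (hxy : x ≠ y) (f : ℕ → V) (n : ℕ)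
    (hf0 : f 0 = x) (hfn : f n = y) (harc : ∀ i < n, G.adj (f i) (f (i + 1)))
    (hshort : n = ddist G.adj x y) :
    {i | i < n ∧ tdist G.adj (f i) (f (i + 1)) = (1, q - 1)}.ncard ≤ 2 := by
  by_contra hcon
  push_neg at hcon
  set S := {i | i < n ∧ tdist G.adj (f i) (f (i + 1)) = (1, q - 1)} with hS
  have hfin : S.Finite := (Set.finite_Iio n).subset (fun i hi => hi.1)
  rw [Set.two_lt_ncard hfin] at hcon
  obtain ⟨a, ha, b, hb, c, hc, hab, hac, hbc⟩ := hcon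
  have hsh : ddist G.adj (f 0) (f n) = n := by
    rw [hf0, hfn]
    exact hshort.symm
  have key : ∀ u v w : ℕ, u ∈ S → v ∈ S → w ∈ S → u < v → v < w → False := by
    intro u v w hu hv hw huv hvw
    exact CTWDRAux.main G hC ((v - u) + (w - u)) f n u v w harc hsh huv hvw
      hw.1 hu.2 hv.2 hw.2 le_rfl
  rcases lt_trichotomy a b with h1 | h1 | h1
  · rcases lt_trichotomy b c with h2 | h2 | h2
    · exact key a b c ha hb hc h1 h2
    · exact absurd h2 hbc
    · rcases lt_trichotomy a c with h3 | h3 | h3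
      · exact key a c b ha hc hb h3 h2
      · exact absurd h3 hac
      · exact key c a b hc ha hb h3 h1
  · exact absurd h1 hab
  · rcases lt_trichotomy a c with h3 | h3 | h3
    · exact key b a c hb ha hc h1 h3
    · exact absurd h3 hac
    · rcases lt_trichotomy b c with h2 | h2 | h2
      · exact key b c a hb hc ha h2 h3
      · exact absurd h2 hbc
      · exact key c b a hc hb ha h2 h1
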